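/- For every β > 0 there exists a constant k > 0 such that the symmetric exponential-type density g_β satisfies (g_β * g_β)(x) ≥ k · g_β(x) for every x ∈ ℝ. -/

import Mathlib

open Real MeasureTheory

open Set


lemma myIntegrableE {β : ℝ} (hβ : 0 < β) :
    Integrable fun x : ℝ => Real.exp (-|x| ^ β) := by
  have h0 : IntegrableOn (fun x : ℝ => Real.exp (-x ^ β)) (Ioi 0) := by
    have hG : IntegrableOn (fun u : ℝ => Real.exp (-u) * u ^ (1/β - 1)) (Ioi 0) :=
      Real.GammaIntegral_convergent (by positivity)
    have h := (integrableOn_Ioi_comp_rpow_iff'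
      (fun u : ℝ => Real.exp (-u) * u ^ (1/β - 1)) (p := β) hβ.ne').mpr hG
    refine h.congr_fun (fun x hx => ?_) measurableSet_Ioi
    have hx0 : (0:ℝ) < x := hx
    simp only [smul_eq_mul]
    rw [← Real.rpow_mul hx0.le, show β * (1/β - 1) = 1 - β by field_simp,
      show x ^ (β-1) * (Real.exp (-x ^ β) * x ^ (1-β))
        = x ^ (β-1) * x ^ (1-β) * Real.exp (-x ^ β) by ring,
      ← Real.rpow_add hx0]
    norm_num
  have h1 : IntegrableOn (fun x : ℝ => Real.exp (-|x| ^ β)) (Ioi 0) :=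
    h0.congr_fun (fun x hx => by rw [abs_of_pos hx]) measurableSet_Ioi
  have h2 : IntegrableOn (fun x : ℝ => Real.exp (-|x| ^ β)) (Iic 0) := by
    rw [← Measure.map_neg_eq_self (volume : Measure ℝ)]
    have m : MeasurableEmbedding (Neg.neg : ℝ → ℝ) :=
      (Homeomorph.neg ℝ).measurableEmbedding
    rw [m.integrableOn_map_iff]
    simp_rw [Function.comp_def, abs_neg, neg_preimage, neg_Iic, neg_zero]
    exact Iff.mpr integrableOn_Ici_iff_integrableOn_Ioi h1
  rw [← integrableOn_univ, ← Set.Iic_union_Ioi (a := (0:ℝ))]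
  exact integrableOn_union.mpr ⟨h2, h1⟩

lemma myRpowSubadd {β a b : ℝ} (ha : 0 ≤ a) (hb : 0 ≤ b) (h0 : 0 ≤ β) (h1 : β ≤ 1) :
    (a + b) ^ β ≤ a ^ β + b ^ β := by
  have h := NNReal.rpow_add_le_add_rpow a.toNNReal b.toNNReal h0 h1
  have := NNReal.coe_le_coe.mpr h
  simpa [← Real.toNNReal_add ha hb, NNReal.coe_rpow, Real.coe_toNNReal _ ha,
    Real.coe_toNNReal _ hb, Real.coe_toNNReal _ (add_nonneg ha hb)] using this

lemma myRpowSuperadd {β a b : ℝ} (ha : 0 ≤ a) (hb : 0 ≤ b) (h1 : 1 ≤ β) :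
    a ^ β + b ^ β ≤ (a + b) ^ β := by
  have h := NNReal.add_rpow_le_rpow_add a.toNNReal b.toNNReal h1
  have := NNReal.coe_le_coe.mpr h
  simpa [← Real.toNNReal_add ha hb, NNReal.coe_rpow, Real.coe_toNNReal _ ha,
    Real.coe_toNNReal _ hb, Real.coe_toNNReal _ (add_nonneg ha hb)] using this

lemma myKey {β : ℝ} (hβ : 0 < β) {x y : ℝ} (hx : 0 ≤ x) (hy : y ∈ Set.Icc (0:ℝ) 1) :
    |y| ^ β + |x - y| ^ β ≤ |x| ^ β + 2 := by
  obtain ⟨hy0, hy1⟩ := hy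
  rw [abs_of_nonneg hy0, abs_of_nonneg hx]
  have hyβ : y ^ β ≤ 1 := Real.rpow_le_one hy0 hy1 hβ.le
  by_cases hβ1 : β ≤ 1
  · have h1 : |x - y| ^ β ≤ (x + y) ^ β := by
      apply Real.rpow_le_rpow (abs_nonneg _) _ hβ.le
      calc |x - y| ≤ |x| + |y| := abs_sub _ _
        _ = x + y := by rw [abs_of_nonneg hx, abs_of_nonneg hy0]
    have h2 : (x + y) ^ β ≤ x ^ β + y ^ β := myRpowSubadd hx hy0 hβ.le hβ1
    linarith
  · push_neg at hβ1
    by_cases hx1 : x ≤ 1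
    · have h1 : |x - y| ^ β ≤ 1 := by
        apply Real.rpow_le_one (abs_nonneg _) _ hβ.le
        rw [abs_le]; constructor <;> linarith
      have h2 : (0:ℝ) ≤ x ^ β := Real.rpow_nonneg hx β
      linarith
    · push_neg at hx1
      have hxy : 0 ≤ x - y := by linarith
      rw [abs_of_nonneg hxy]
      have h1 : y ^ β + (x - y) ^ β ≤ (y + (x - y)) ^ β :=
        myRpowSuperadd hy0 hxy hβ1.le
      have h2 : y + (x - y) = x := by ring
      rw [h2] at h1
      linarith


/-- The symmetric exponential-type probability density `g_β(y) = r_β e^{−|y|^β}` on `ℝ`,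
where `r_β = (∫ e^{−|y|^β} dy)⁻¹` is the normalizing constant. -/
noncomputable def expType (β : ℝ) (y : ℝ) : ℝ :=
  (∫ z : ℝ, Real.exp (-|z| ^ β))⁻¹ * Real.exp (-|y| ^ β)

lemma myIpos {β : ℝ} (hβ : 0 < β) : 0 < ∫ z : ℝ, Real.exp (-|z| ^ β) := by
  have hE := myIntegrableE hβ
  have h1 : ∫ z in Icc (0:ℝ) 1, Real.exp (-|z| ^ β) ≤ ∫ z : ℝ, Real.exp (-|z| ^ β) :=
    setIntegral_le_integral hE (ae_of_all _ fun z => (Real.exp_pos _).le)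
  have h2 : Real.exp (-1) ≤ ∫ z in Icc (0:ℝ) 1, Real.exp (-|z| ^ β) := by
    have hm := setIntegral_mono_on
      (s := Icc (0:ℝ) 1) (f := fun _ : ℝ => Real.exp (-1)) (g := fun z : ℝ => Real.exp (-|z| ^ β))
      (integrableOn_const (by simp [Real.volume_Icc])) hE.integrableOn
      measurableSet_Icc (fun z hz => by
        apply Real.exp_le_exp.mpr
        simp only [neg_le_neg_iff]
        apply Real.rpow_le_one (abs_nonneg _) _ hβ.le
        rw [abs_le]; exact ⟨by linarith [hz.1], hz.2⟩)
    rwa [setIntegral_const, Real.volume_real_Icc_of_le zero_le_one, sub_zero,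
      one_smul] at hm
  linarith [Real.exp_pos (-1 : ℝ)]

lemma myHalf (β : ℝ) (hβ : 0 < β) {x : ℝ} (hx : 0 ≤ x) :
    (∫ z : ℝ, Real.exp (-|z| ^ β))⁻¹ * Real.exp (-2) * expType β x
      ≤ ∫ y : ℝ, expType β y * expType β (x - y) := by
  set I := ∫ z : ℝ, Real.exp (-|z| ^ β) with hIdef
  have hI : 0 < I := myIpos hβ
  set r := I⁻¹ with hrdef
  have hr : 0 < r := inv_pos.mpr hI
  have hE := myIntegrableE hβ
  have hE1 : ∀ t : ℝ, Real.exp (-|t| ^ β) ≤ 1 := fun t =>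
    Real.exp_le_one_iff.mpr (neg_nonpos.mpr (Real.rpow_nonneg (abs_nonneg _) _))
  have hc : Continuous fun t : ℝ => Real.exp (-|t| ^ β) :=
    ((continuous_abs.rpow_const fun t => Or.inr hβ.le).neg).rexp
  have hglobal : Integrable fun y : ℝ => expType β y * expType β (x - y) := by
    apply Integrable.mono' ((hE.const_mul (r * r)))
    · exact ((continuous_const.mul hc).mul (continuous_const.mul
        (hc.comp (continuous_const.sub continuous_id)))).aestronglyMeasurable
    · refine ae_of_all _ fun y => ?_
      have h0 : (0:ℝ) ≤ expType β y * expType β (x - y) :=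
        mul_nonneg (mul_nonneg hr.le (Real.exp_pos _).le)
          (mul_nonneg hr.le (Real.exp_pos _).le)
      rw [Real.norm_of_nonneg h0]
      simp only [expType, ← hIdef, ← hrdef]
      calc r * Real.exp (-|y| ^ β) * (r * Real.exp (-|x - y| ^ β))
          ≤ r * Real.exp (-|y| ^ β) * (r * 1) := by
            apply mul_le_mul_of_nonneg_left _ (mul_nonneg hr.le (Real.exp_pos _).le)
            exact mul_le_mul_of_nonneg_left (hE1 _) hr.le
        _ = r * r * Real.exp (-|y| ^ β) := by ring
  have hvol : (volume (Icc (0:ℝ) 1)).toReal = 1 := by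
    rw [Real.volume_Icc, sub_zero, ENNReal.toReal_ofReal zero_le_one]
  calc r * Real.exp (-2) * expType β x
      = ∫ _ in Icc (0:ℝ) 1, r * r * Real.exp (-(|x| ^ β + 2)) := by
        rw [setIntegral_const, measureReal_def, hvol, one_smul]
        simp only [expType, ← hIdef, ← hrdef]
        rw [show -(|x| ^ β + 2) = -2 + -|x| ^ β by ring, Real.exp_add]
        ring
    _ ≤ ∫ y in Icc (0:ℝ) 1, expType β y * expType β (x - y) := by
        apply setIntegral_mono_on
          (integrableOn_const (by simp [Real.volume_Icc]))
          hglobal.integrableOn measurableSet_Icc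
        intro y hy
        have hk := myKey hβ hx hy
        have hexp : Real.exp (-(|x| ^ β + 2)) ≤
            Real.exp (-|y| ^ β) * Real.exp (-|x - y| ^ β) := by
          rw [← Real.exp_add]
          exact Real.exp_le_exp.mpr (by linarith)
        simp only [expType, ← hIdef, ← hrdef]
        calc r * r * Real.exp (-(|x| ^ β + 2))
            ≤ r * r * (Real.exp (-|y| ^ β) * Real.exp (-|x - y| ^ β)) :=
              mul_le_mul_of_nonneg_left hexp (by positivity)
          _ = r * Real.exp (-|y| ^ β) * (r * Real.exp (-|x - y| ^ β)) := by ring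
    _ ≤ ∫ y : ℝ, expType β y * expType β (x - y) := by
        apply setIntegral_le_integral hglobal
        refine ae_of_all _ fun y => ?_
        exact mul_nonneg (mul_nonneg hr.le (Real.exp_pos _).le)
          (mul_nonneg hr.le (Real.exp_pos _).le)

/-- For every `β > 0` there is a constant `k > 0` with
`(g_β * g_β)(x) ≥ k · g_β(x)` for all `x ∈ ℝ`. -/
theorem statement_16 (β : ℝ) (hβ : 0 < β) :
    ∃ k : ℝ, 0 < k ∧ ∀ x : ℝ,
      k * expType β x ≤ ∫ y : ℝ, expType β y * expType β (x - y) := by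
  refine ⟨(∫ z : ℝ, Real.exp (-|z| ^ β))⁻¹ * Real.exp (-2),
    mul_pos (inv_pos.mpr (myIpos hβ)) (Real.exp_pos _), fun x => ?_⟩
  rcases le_or_gt 0 x with hx | hx
  · exact myHalf β hβ hx
  · have h1 := myHalf β hβ (neg_nonneg.mpr hx.le)
    have h2 : (∫ y : ℝ, expType β y * expType β (-x - y))
        = ∫ y : ℝ, expType β y * expType β (x - y) := by
      rw [← integral_neg_eq_self (fun y => expType β y * expType β (-x - y)) volume]
      congr 1; funext y
      simp only [expType, abs_neg]
      rw [show -x - -y = -(x - y) by ring, abs_neg]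
    have h3 : expType β (-x) = expType β x := by simp [expType, abs_neg]
    rw [h3, h2] at h1
    exact h1
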